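/- Let 0<ε₁<ε₂<ε₃ and define α(s,t) = (t−s)ε₁ε₂ε₃ / (s²t − (ε₁+ε₂+ε₃)st + (ε₁ε₂+ε₁ε₃+ε₂ε₃)t − ε₁ε₂ε₃). Then the Gaussian curvature of the Fresnel surface at Φ(s,t), given by K(s,t) = (st−(ε₁+ε₂)t+ε₁ε₂)(st−(ε₁+ε₃)t+ε₁ε₃)(st−(ε₂+ε₃)t+ε₂ε₃) / ((s−t)(s²t−(ε₁+ε₂+ε₃)st+(ε₁ε₂+ε₁ε₃+ε₂ε₃)t−ε₁ε₂ε₃)²), satisfies the identity K(s,t) = (α(s,t)−ε₁)(α(s,t)−ε₂)(α(s,t)−ε₃) / (α(s,t)(s−ε₁)(s−ε₂)(s−ε₃)). -/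

import Mathlib

/-- The Gaussian curvature of the Fresnel surface in Darboux coordinates, expressed via
the squared distance `α(s,t)` of the origin to the tangent plane. -/
theorem stmt8 (ε₁ ε₂ ε₃ s t : ℝ) (h₀ : 0 < ε₁) (h₁₂ : ε₁ < ε₂) (h₂₃ : ε₂ < ε₃)
    (hst : (ε₁ < s ∧ s < ε₂ ∧ ε₂ < t ∧ t < ε₃)
      ∨ (ε₁ < t ∧ t < ε₂ ∧ ε₂ < s ∧ s < ε₃)) :
    let α : ℝ := (t - s) * ε₁ * ε₂ * ε₃
      / (s ^ 2 * t - (ε₁ + ε₂ + ε₃) * s * t + (ε₁ * ε₂ + ε₁ * ε₃ + ε₂ * ε₃) * t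
          - ε₁ * ε₂ * ε₃)
    let K : ℝ := (s * t - (ε₁ + ε₂) * t + ε₁ * ε₂) * (s * t - (ε₁ + ε₃) * t + ε₁ * ε₃)
      * (s * t - (ε₂ + ε₃) * t + ε₂ * ε₃)
      / ((s - t) * (s ^ 2 * t - (ε₁ + ε₂ + ε₃) * s * t
          + (ε₁ * ε₂ + ε₁ * ε₃ + ε₂ * ε₃) * t - ε₁ * ε₂ * ε₃) ^ 2)
    K = (α - ε₁) * (α - ε₂) * (α - ε₃) / (α * (s - ε₁) * (s - ε₂) * (s - ε₃)) := by
  intro α K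
  have he1 : ε₁ ≠ 0 := ne_of_gt h₀
  have he2 : ε₂ ≠ 0 := ne_of_gt (lt_trans h₀ h₁₂)
  have he3 : ε₃ ≠ 0 := ne_of_gt (lt_trans (lt_trans h₀ h₁₂) h₂₃)
  have hs1 : s - ε₁ ≠ 0 := by
    rcases hst with ⟨h, _⟩ | ⟨_, _, h, _⟩
    · exact sub_ne_zero.mpr (ne_of_gt h)
    · exact sub_ne_zero.mpr (ne_of_gt (lt_trans h₁₂ h))
  have hs2 : s - ε₂ ≠ 0 := by
    rcases hst with ⟨_, h, _⟩ | ⟨_, _, h, _⟩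
    · exact sub_ne_zero.mpr (ne_of_lt h)
    · exact sub_ne_zero.mpr (ne_of_gt h)
  have hs3 : s - ε₃ ≠ 0 := by
    rcases hst with ⟨_, h, _, _⟩ | ⟨_, _, _, h⟩
    · exact sub_ne_zero.mpr (ne_of_lt (lt_trans h h₂₃))
    · exact sub_ne_zero.mpr (ne_of_lt h)
  have hts : t - s ≠ 0 := by
    rcases hst with ⟨_, h, h', _⟩ | ⟨_, h, h', _⟩
    · exact sub_ne_zero.mpr (ne_of_gt (lt_trans h h'))
    · exact sub_ne_zero.mpr (ne_of_lt (lt_trans h h'))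
  have hst' : s - t ≠ 0 := fun h => hts (by linarith [sub_eq_zero.mp h])
  by_cases hD : s ^ 2 * t - (ε₁ + ε₂ + ε₃) * s * t + (ε₁ * ε₂ + ε₁ * ε₃ + ε₂ * ε₃) * t
      - ε₁ * ε₂ * ε₃ = 0
  · show K = _
    simp only [K, α, hD, div_zero, zero_mul, mul_zero, ne_eq, OfNat.ofNat_ne_zero,
      not_false_eq_true, zero_pow]
  · have hα : α ≠ 0 := by
      simp only [α]
      exact div_ne_zero (mul_ne_zero (mul_ne_zero (mul_ne_zero hts he1) he2) he3) hD
    show K = _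
    simp only [K, α]
    rw [div_eq_div_iff]
    · generalize hDd : s ^ 2 * t - (ε₁ + ε₂ + ε₃) * s * t + (ε₁ * ε₂ + ε₁ * ε₃ + ε₂ * ε₃) * t
          - ε₁ * ε₂ * ε₃ = D at hD ⊢
      field_simp
      subst hDd
      ring
    · exact mul_ne_zero hst' (pow_ne_zero 2 hD)
    · simp only [α] at hα
      exact mul_ne_zero (mul_ne_zero (mul_ne_zero hα hs1) hs2) hs3
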